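/- There exists a non-triangular special biserial bound quiver (Q,I) whose fundamental group π_1(Q,I) is isomorphic to Z × Z; in particular, the fundamental group of a special biserial bound quiver need not be free. -/

import Mathlib

open Classical

noncomputable section

/-- A finite quiver: finite sets of vertices and arrows with source and target maps. -/
structure FQuiver where
  V : Type
  A : Type
  [fintV : Fintype V]
  [decV : DecidableEq V]
  [fintA : Fintype A]
  [decA : DecidableEq A]
  src : A → V
  tgt : A → V

attribute [instance] FQuiver.fintV FQuiver.decV FQuiver.fintA FQuiver.decA

namespace FQuiver

variable {Q : FQuiver}

/-- Oriented paths in a quiver. -/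
inductive Path (Q : FQuiver) : Q.V → Q.V → Type
  | nil (v : Q.V) : Path Q v v
  | cons (a : Q.A) {w : Q.V} (p : Path Q (Q.tgt a) w) : Path Q (Q.src a) w

/-- Composition (concatenation) of paths. -/
def Path.comp : ∀ {u v w : Q.V}, Path Q u v → Path Q v w → Path Q u w
  | _, _, _, .nil _, q => q
  | _, _, _, .cons a p, q => .cons a (Path.comp p q)

/-- Length of a path. -/
def Path.length : ∀ {u v : Q.V}, Path Q u v → ℕ
  | _, _, .nil _ => 0
  | _, _, .cons _ p => Path.length p + 1

/-- The list of arrows of a path, in order. -/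
def Path.arrows : ∀ {u v : Q.V}, Path Q u v → List Q.A
  | _, _, .nil _ => []
  | _, _, .cons a p => a :: Path.arrows p

/-- An arrow regarded as a path of length one. -/
def arrow (Q : FQuiver) (a : Q.A) : Path Q (Q.src a) (Q.tgt a) := .cons a (.nil _)

/-- Power of an oriented cycle. -/
def Path.pow {x : Q.V} (c : Path Q x x) : ℕ → Path Q x x
  | 0 => .nil x
  | n + 1 => c.comp (Path.pow c n)

/-- Transport a path along equalities of its endpoints. -/
def Path.cast {u u' v v' : Q.V} (hu : u = u') (hv : v = v') (p : Path Q u v) :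
    Path Q u' v' := by subst hu; subst hv; exact p

/-- The length-two path `ab` formed by two composable arrows. -/
def comp2 (a b : Q.A) (h : Q.src b = Q.tgt a) : Path Q (Q.src a) (Q.tgt b) :=
  (arrow Q a).comp ((arrow Q b).cast h rfl)

/-- The set of all paths of a quiver, bundled with their endpoints. -/
def PathsSigma (Q : FQuiver) : Type := Σ (u : Q.V) (v : Q.V), Path Q u v

/-- The underlying vector space of the path algebra `kQ`: the free `k`-module on paths. -/
abbrev PAlg (k : Type) [Field k] (Q : FQuiver) : Type := PathsSigma Q →₀ k

/-- The basis vector of `kQ` corresponding to a path. -/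
def pvec (k : Type) [Field k] {u v : Q.V} (p : Path Q u v) : PAlg k Q :=
  Finsupp.single ⟨u, v, p⟩ 1

/-- Left multiplication of an element of `kQ` by a path. -/
def lmul (k : Type) [Field k] {u v : Q.V} (p : Path Q u v) (x : PAlg k Q) : PAlg k Q :=
  x.sum fun s c => if h : s.1 = v then c • pvec k (p.comp ((Sigma.snd (Sigma.snd s)).cast h rfl)) else 0

/-- Right multiplication of an element of `kQ` by a path. -/
def rmul (k : Type) [Field k] {u v : Q.V} (x : PAlg k Q) (p : Path Q u v) : PAlg k Q :=
  x.sum fun s c => if h : s.2.1 = u then c • pvec k (Path.comp ((Sigma.snd (Sigma.snd s)).cast rfl h) p) else 0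

/-- The two-sided ideal of `kQ` generated by a set of elements. -/
def idealGen (k : Type) [Field k] (Q : FQuiver) (s : Set (PAlg k Q)) : Submodule k (PAlg k Q) :=
  sInf {M : Submodule k (PAlg k Q) |
    s ⊆ (M : Set (PAlg k Q)) ∧
    ∀ (u v : Q.V) (p : Path Q u v) (x : PAlg k Q), x ∈ M → lmul k p x ∈ M ∧ rmul k x p ∈ M}

/-- An admissible (two-sided) ideal `(kQ⁺)ᵐ ⊆ I ⊆ (kQ⁺)²` of the path algebra. -/
structure AdmissibleIdeal (k : Type) [Field k] (Q : FQuiver) where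
  I : Submodule k (PAlg k Q)
  lmul_mem : ∀ {u v : Q.V} (p : Path Q u v) {x : PAlg k Q}, x ∈ I → lmul k p x ∈ I
  rmul_mem : ∀ {u v : Q.V} (p : Path Q u v) {x : PAlg k Q}, x ∈ I → rmul k x p ∈ I
  bound : ℕ
  two_le_bound : 2 ≤ bound
  pow_le : ∀ {u v : Q.V} (p : Path Q u v), bound ≤ p.length → pvec k p ∈ I
  le_sq : ∀ x ∈ I, ∀ s ∈ x.support, 2 ≤ (Sigma.snd (Sigma.snd s)).length

/-- A special biserial bound quiver `(Q, I)`. -/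
structure SpecialBiserial (k : Type) [Field k] (Q : FQuiver) extends AdmissibleIdeal k Q where
  src_card : ∀ v : Q.V, Fintype.card {a : Q.A // Q.src a = v} ≤ 2
  tgt_card : ∀ v : Q.V, Fintype.card {a : Q.A // Q.tgt a = v} ≤ 2
  unique_succ : ∀ (a b c : Q.A) (hb : Q.src b = Q.tgt a) (hc : Q.src c = Q.tgt a),
      pvec k (comp2 a b hb) ∉ I → pvec k (comp2 a c hc) ∉ I → b = c
  unique_pred : ∀ (a b c : Q.A) (hb : Q.tgt b = Q.src a) (hc : Q.tgt c = Q.src a),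
      pvec k (comp2 b a hb.symm) ∉ I → pvec k (comp2 c a hc.symm) ∉ I → b = c

/-- A binomial relation `u - λv ∈ I` between distinct parallel paths not in `I`. -/
structure BinRel {k : Type} [Field k] {Q : FQuiver} (J : AdmissibleIdeal k Q) where
  s : Q.V
  t : Q.V
  u : Path Q s t
  v : Path Q s t
  coef : k
  coef_ne : coef ≠ 0
  u_ne_v : u ≠ v
  u_not_mem : pvec k u ∉ J.I
  v_not_mem : pvec k v ∉ J.I
  rel_mem : pvec k u - coef • pvec k v ∈ J.I

/-- `I` is generated by a set of paths (monomial relations) together with the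
binomial relations in `R`. -/
def Generates {k : Type} [Field k] {Q : FQuiver} (J : AdmissibleIdeal k Q)
    (R : Set (BinRel J)) : Prop :=
  ∃ P : Set (PathsSigma Q),
    (∀ s ∈ P, pvec k (Sigma.snd (Sigma.snd s)) ∈ J.I) ∧
    J.I = idealGen k Q
      (((fun s : PathsSigma Q => pvec k (Sigma.snd (Sigma.snd s))) '' P) ∪
       ((fun r : BinRel J => pvec k r.u - r.coef • pvec k r.v) '' R))

/-- The ideal `S ⊆ A = kQ/I`: the span of the residue classes of the paths occurring
in the binomial relations of `R`. -/
def Smod {k : Type} [Field k] {Q : FQuiver} (J : AdmissibleIdeal k Q) (R : Set (BinRel J)) :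
    Submodule k (PAlg k Q ⧸ J.I) :=
  Submodule.span k
    ((fun r : BinRel J => (Submodule.Quotient.mk (pvec k r.u) : PAlg k Q ⧸ J.I)) '' R)

/-- Number of connected components of the underlying graph of `Q`. -/
def numComponents (Q : FQuiver) : ℕ :=
  Nat.card (Quot (fun u v : Q.V => ∃ a : Q.A, Q.src a = u ∧ Q.tgt a = v))

/-- A quiver is acyclic (triangular) if it has no nontrivial oriented cycle. -/
def Acyclic (Q : FQuiver) : Prop := ∀ (x : Q.V) (p : Path Q x x), p.length = 0

/-- A simple cycle: a nontrivial oriented cycle visiting no vertex twice. -/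
def IsSimpleCycle {x : Q.V} (p : Path Q x x) : Prop :=
  p.length ≠ 0 ∧ (p.arrows.map Q.src).Nodup

/-- `dim_k S = χ(Q)`, written additively: `dim S + |Q₀| = |Q₁| + N`. -/
def EulerEq {k : Type} [Field k] {Q : FQuiver} (J : AdmissibleIdeal k Q)
    (R : Set (BinRel J)) : Prop :=
  Module.finrank k ↥(Smod J R) + Fintype.card Q.V = Fintype.card Q.A + numComponents Q

/-- The word in the free group on the arrows determined by a path. -/
def pathWord (Q : FQuiver) {u v : Q.V} (p : Path Q u v) : FreeGroup Q.A :=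
  (p.arrows.map FreeGroup.of).prod

/-- `T` is a spanning tree of (the underlying graph of) `Q`. -/
def IsSpanningTree (Q : FQuiver) (T : Set Q.A) : Prop :=
  (∀ u v : Q.V,
      Quot.mk (fun a b : Q.V => ∃ e ∈ T, Q.src e = a ∧ Q.tgt e = b) u =
      Quot.mk (fun a b : Q.V => ∃ e ∈ T, Q.src e = a ∧ Q.tgt e = b) v) ∧
  Nat.card T + 1 = Fintype.card Q.V

/-- The fundamental group of the bound quiver `(Q, I)` (for connected `Q`,
with respect to a spanning tree `T`): the free group on the arrows modulo the
tree arrows and the homotopy relations coming from the binomial relations. -/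
abbrev pi1 {k : Type} [Field k] {Q : FQuiver} (J : AdmissibleIdeal k Q)
    (T : Set Q.A) (R : Set (BinRel J)) : Type :=
  FreeGroup Q.A ⧸ Subgroup.normalClosure
    ((FreeGroup.of '' T) ∪
     ((fun r : BinRel J => pathWord Q r.u * (pathWord Q r.v)⁻¹) '' R))

end FQuiver


namespace FQuiver

@[reducible] def Q2 : FQuiver := { V := Unit, A := Bool, src := fun _ => (), tgt := fun _ => () }

def pth : List Bool → Path Q2 () ()
  | [] => Path.nil (Q := Q2) ()
  | x :: l => Path.cons (Q := Q2) x (pth l)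

lemma arrows_pth (l : List Bool) : (pth l).arrows = l := by
  induction l with
  | nil => rfl
  | cons x l ih => simp [pth, Path.arrows, ih]

lemma pth_arrows {u v : Q2.V} (p : Path Q2 u v) : pth p.arrows = p := by
  induction p with
  | nil => rfl
  | cons a p ih => simpa [pth, Path.arrows] using congrArg (Path.cons a) ih

lemma pth_inj {l l' : List Bool} (h : pth l = pth l') : l = l' := by
  rw [← arrows_pth l, ← arrows_pth l', h]

lemma length_pth (l : List Bool) : (pth l).length = l.length := by
  induction l with
  | nil => rfl
  | cons x l ih => simp [pth, Path.length, ih]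

lemma comp_pth (l l' : List Bool) : (pth l).comp (pth l') = pth (l ++ l') := by
  induction l with
  | nil => rfl
  | cons x l ih => simp [pth, Path.comp, ih]

lemma sig_inj {p q : Path Q2 () ()} (h : (⟨(), (), p⟩ : PathsSigma Q2) = ⟨(), (), q⟩) :
    p = q := by
  have := congrArg (fun s : PathsSigma Q2 => (Sigma.snd (Sigma.snd s)).arrows) h
  simp only at this
  rw [← pth_arrows p, ← pth_arrows q, this]

lemma cast_eq {u v u' v' : Q2.V} (hu : u = u') (hv : v = v') (p : Path Q2 u v) :
    p.cast hu hv = p := rfl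

lemma length_comp {u v w : Q2.V} (p : Path Q2 u v) (q : Path Q2 v w) :
    (p.comp q).length = p.length + q.length := by
  rw [← pth_arrows p, ← pth_arrows q, comp_pth, length_pth, length_pth, length_pth]
  exact List.length_append

variable {k : Type} [Field k]

lemma lmul_pvec (p q : Path Q2 () ()) : lmul k p (pvec k q) = pvec k (p.comp q) := by
  erw [lmul, pvec, Finsupp.sum_single_index]
  · rw [dif_pos rfl, cast_eq, one_smul]
  · rw [dif_pos rfl, zero_smul]

lemma rmul_pvec (p q : Path Q2 () ()) : rmul k (pvec k q) p = pvec k (q.comp p) := by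
  erw [rmul, pvec, Finsupp.sum_single_index]
  · rw [dif_pos rfl, cast_eq, one_smul]
  · rw [dif_pos rfl, zero_smul]

lemma comp_nil {u v w : Q2.V} (p : Path Q2 u v) : p.comp (Path.nil w) = p := by
  rw [← pth_arrows p]
  show (pth _).comp (pth []) = _
  rw [comp_pth, List.append_nil]

lemma single_eta (s : PathsSigma Q2) (c : k) :
    Finsupp.single (⟨(), (), Sigma.snd (Sigma.snd s)⟩ : PathsSigma Q2) c = Finsupp.single s c := rfl

lemma lmul_nil (v : Q2.V) (x : PAlg k Q2) : lmul k (Path.nil v) x = x := by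
  rw [lmul]
  conv_rhs => rw [← Finsupp.sum_single x]
  refine Finsupp.sum_congr (fun s _ => ?_)
  rw [dif_pos rfl]
  show x s • pvec k (Sigma.snd (Sigma.snd s)) = _
  erw [pvec, Finsupp.smul_single, smul_eq_mul, mul_one, single_eta]

lemma rmul_nil (v : Q2.V) (x : PAlg k Q2) : rmul k x (Path.nil v) = x := by
  rw [rmul]
  conv_rhs => rw [← Finsupp.sum_single x]
  refine Finsupp.sum_congr (fun s _ => ?_)
  erw [dif_pos rfl, cast_eq, comp_nil, pvec, Finsupp.smul_single, smul_eq_mul, mul_one,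
    single_eta]

lemma rmul_sub {u v : Q2.V} (x y : PAlg k Q2) (p : Path Q2 u v) :
    rmul k (x - y) p = rmul k x p - rmul k y p := by
  rw [rmul, rmul, rmul]
  apply Finsupp.sum_sub_index
  intro s b₁ b₂
  rw [dif_pos rfl, dif_pos rfl, dif_pos rfl, sub_smul]

lemma support_lmul (p : Path Q2 () ()) (x : PAlg k Q2) :
    ∀ s ∈ (lmul k p x).support, ∃ s' ∈ x.support,
      (Sigma.snd (Sigma.snd s)).length = p.length + (Sigma.snd (Sigma.snd s')).length := by
  intro s hs
  rw [lmul] at hs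
  obtain ⟨s', hs', hmem⟩ := Finset.mem_biUnion.mp (Finsupp.support_sum hs)
  refine ⟨s', hs', ?_⟩
  rw [dif_pos rfl, cast_eq] at hmem
  have h2 : s ∈ (Finsupp.single (⟨(), (), p.comp (Sigma.snd (Sigma.snd s'))⟩ : PathsSigma Q2)
      ((x s') * 1)).support := by
    erw [pvec, Finsupp.smul_single, smul_eq_mul] at hmem
    exact hmem
  have h3 := Finsupp.support_single_subset h2
  erw [Finset.mem_singleton] at h3
  rw [h3]
  exact length_comp p _

lemma support_rmul (p : Path Q2 () ()) (x : PAlg k Q2) :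
    ∀ s ∈ (rmul k x p).support, ∃ s' ∈ x.support,
      (Sigma.snd (Sigma.snd s)).length = (Sigma.snd (Sigma.snd s')).length + p.length := by
  intro s hs
  rw [rmul] at hs
  obtain ⟨s', hs', hmem⟩ := Finset.mem_biUnion.mp (Finsupp.support_sum hs)
  refine ⟨s', hs', ?_⟩
  rw [dif_pos rfl, cast_eq] at hmem
  have h2 : s ∈ (Finsupp.single (⟨(), (), (Sigma.snd (Sigma.snd s')).comp p⟩ : PathsSigma Q2)
      ((x s') * 1)).support := by
    erw [pvec, Finsupp.smul_single, smul_eq_mul] at hmem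
    exact hmem
  have h3 := Finsupp.support_single_subset h2
  erw [Finset.mem_singleton] at h3
  rw [h3]
  exact length_comp _ p

/-- The set of generators of our ideal. -/
def G (k : Type) [Field k] : Set (PAlg k Q2) :=
  {pvec k (pth [false, false]), pvec k (pth [true, true]),
    pvec k (pth [false, true]) - pvec k (pth [true, false])}

/-- Closedness under left and right multiplication by paths. -/
def Closed (M : Submodule k (PAlg k Q2)) : Prop :=
  ∀ (u v : Q2.V) (p : Path Q2 u v) (x : PAlg k Q2), x ∈ M → lmul k p x ∈ M ∧ rmul k x p ∈ M

lemma mem_idealGen_iff (s : Set (PAlg k Q2)) (x : PAlg k Q2) :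
    x ∈ idealGen k Q2 s ↔ ∀ M : Submodule k (PAlg k Q2), s ⊆ M → Closed M → x ∈ M := by
  rw [idealGen, Submodule.mem_sInf]
  constructor
  · intro h M h1 h2
    exact h M ⟨h1, fun u v p y hy => h2 u v p y hy⟩
  · intro h M hM
    exact h M hM.1 fun u v p y hy => hM.2 u v p y hy

lemma subset_idealGen (s : Set (PAlg k Q2)) : s ⊆ (idealGen k Q2 s : Set (PAlg k Q2)) := by
  intro x hx
  exact (mem_idealGen_iff s x).mpr fun M h1 _ => h1 hx

lemma idealGen_closed (s : Set (PAlg k Q2)) : Closed (idealGen k Q2 s) := by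
  intro u v p x hx
  constructor <;> (rw [mem_idealGen_iff]; intro M h1 h2)
  · exact (h2 u v p x ((mem_idealGen_iff s x).mp hx M h1 h2)).1
  · exact (h2 u v p x ((mem_idealGen_iff s x).mp hx M h1 h2)).2

/-- The test submodule: supported in length ≥ 2 with a linear condition killing
`ab - ba` but not `ab` nor `ba`. -/
def MT (k : Type) [Field k] : Submodule k (PAlg k Q2) where
  carrier := {x | (∀ s ∈ x.support, 2 ≤ (Sigma.snd (Sigma.snd s)).length) ∧
    x ⟨(), (), pth [false, true]⟩ + x ⟨(), (), pth [true, false]⟩ = 0}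
  zero_mem' := by simp; exact add_zero (0 : k)
  add_mem' := by
    rintro x y ⟨hx1, hx2⟩ ⟨hy1, hy2⟩
    refine ⟨fun s hs => ?_, ?_⟩
    · rcases Finset.mem_union.mp (Finsupp.support_add hs) with h | h
      · exact hx1 s h
      · exact hy1 s h
    · erw [Finsupp.add_apply, Finsupp.add_apply]
      linear_combination hx2 + hy2
  smul_mem' := by
    rintro c x ⟨hx1, hx2⟩
    refine ⟨fun s hs => hx1 s (Finsupp.support_smul hs), ?_⟩
    erw [Finsupp.smul_apply, Finsupp.smul_apply, smul_eq_mul, smul_eq_mul]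
    linear_combination c * hx2

lemma G_subset_MT : G k ⊆ MT k := by
  have hs : ∀ l : List Bool, (pvec k (pth l)).support ⊆ {⟨(), (), pth l⟩} :=
    fun l => Finsupp.support_single_subset
  have hne : ∀ l l' : List Bool, l ≠ l' →
      (pvec k (pth l)) ⟨(), (), pth l'⟩ = 0 := by
    intro l l' h
    refine Finsupp.single_eq_of_ne fun hc => h (pth_inj (sig_inj hc.symm))
  have hlen : ∀ (l : List Bool), l.length = 2 → ∀ s ∈ (pvec k (pth l)).support,
      2 ≤ (Sigma.snd (Sigma.snd s)).length := by
    intro l hl s hs'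
    have := Finset.mem_singleton.mp (hs l hs')
    rw [this]
    show 2 ≤ (pth l).length
    rw [length_pth, hl]
  rintro x (rfl | rfl | rfl)
  · exact ⟨hlen _ rfl, by rw [hne _ [false,true] (by decide), hne _ [true,false] (by decide),
      add_zero]⟩
  · exact ⟨hlen _ rfl, by rw [hne _ [false,true] (by decide), hne _ [true,false] (by decide),
      add_zero]⟩
  · refine ⟨fun s hs' => ?_, ?_⟩
    · rcases Finset.mem_union.mp (Finsupp.support_sub hs') with h | h
      · exact hlen [false,true] rfl s h
      · exact hlen [true,false] rfl s h
    · erw [Finsupp.sub_apply, Finsupp.sub_apply]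
      erw [hne [false,true] [true,false] (by decide), hne [true,false] [false,true] (by decide)]
      show (pvec k (pth [false,true])) ⟨(), (), pth [false,true]⟩ - 0 +
        (0 - (pvec k (pth [true,false])) ⟨(), (), pth [true,false]⟩) = 0
      erw [pvec, pvec, Finsupp.single_eq_same, Finsupp.single_eq_same]
      ring

lemma MT_mem_of_three (y : PAlg k Q2)
    (hy : ∀ s ∈ y.support, 3 ≤ (Sigma.snd (Sigma.snd s)).length) : y ∈ MT k := by
  have coeff : ∀ l : List Bool, l.length = 2 → y ⟨(), (), pth l⟩ = 0 := by
    intro l hl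
    erw [← Finsupp.notMem_support_iff]
    intro hc
    have h3 : 3 ≤ (pth l).length := hy _ hc
    have : (pth l).length = 2 := by rw [length_pth, hl]
    omega
  exact ⟨fun s hs => le_trans (by norm_num) (hy s hs),
    by rw [coeff [false, true] rfl, coeff [true, false] rfl, add_zero]⟩

lemma MT_closed : Closed (MT k) := by
  intro u v p x hx
  obtain ⟨hx1, hx2⟩ := hx
  cases p with
  | nil w => rw [lmul_nil, rmul_nil]; exact ⟨⟨hx1, hx2⟩, hx1, hx2⟩
  | cons a0 p' =>
    have hlen1 : (Path.cons (Q := Q2) a0 p').length = p'.length + 1 := rfl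
    constructor
    · refine MT_mem_of_three _ fun s hs => ?_
      obtain ⟨s', hs', heq⟩ := support_lmul (Path.cons a0 p') x s hs
      have := hx1 s' hs'
      omega
    · refine MT_mem_of_three _ fun s hs => ?_
      obtain ⟨s', hs', heq⟩ := support_rmul (Path.cons a0 p') x s hs
      have := hx1 s' hs'
      omega

lemma mem_aa (M : Submodule k (PAlg k Q2)) (hG : G k ⊆ M) :
    pvec k (pth [false, false]) ∈ M := hG (Set.mem_insert _ _)

lemma mem_bb (M : Submodule k (PAlg k Q2)) (hG : G k ⊆ M) :
    pvec k (pth [true, true]) ∈ M := hG (Set.mem_insert_of_mem _ (Set.mem_insert _ _))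

lemma mem_binom (M : Submodule k (PAlg k Q2)) (hG : G k ⊆ M) :
    pvec k (pth [false, true]) - pvec k (pth [true, false]) ∈ M :=
  hG (Set.mem_insert_of_mem _ (Set.mem_insert_of_mem _ rfl))

lemma h1 (M : Submodule k (PAlg k Q2)) (hG : G k ⊆ M) (hC : Closed M) (x : Bool)
    (t : List Bool) : pvec k (pth (x :: x :: t)) ∈ M := by
  have e : pvec k (pth (x :: x :: t)) = rmul k (pvec k (pth [x, x])) (pth t) := by
    rw [rmul_pvec, comp_pth]; rfl
  rw [e]
  refine (hC () () (pth t) _ ?_).2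
  cases x
  · exact mem_aa M hG
  · exact mem_bb M hG

lemma h2 (M : Submodule k (PAlg k Q2)) (hG : G k ⊆ M) (hC : Closed M) (x y : Bool)
    (t : List Bool) : pvec k (pth (x :: y :: y :: t)) ∈ M := by
  have e : pvec k (pth (x :: y :: y :: t)) = lmul k (pth [x]) (pvec k (pth (y :: y :: t))) := by
    rw [lmul_pvec, comp_pth]; rfl
  rw [e]
  exact (hC () () (pth [x]) _ (h1 M hG hC y t)).1

lemma h3f (M : Submodule k (PAlg k Q2)) (hG : G k ⊆ M) (hC : Closed M) (t : List Bool) :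
    pvec k (pth (false :: true :: false :: t)) ∈ M := by
  have e : rmul k (pvec k (pth [false, true]) - pvec k (pth [true, false])) (pth (false :: t))
      = pvec k (pth (false :: true :: false :: t)) - pvec k (pth (true :: false :: false :: t)) := by
    rw [rmul_sub, rmul_pvec, rmul_pvec, comp_pth, comp_pth]; rfl
  have hr := (hC () () (pth (false :: t)) _ (mem_binom M hG)).2
  rw [e] at hr
  have := M.add_mem hr (h2 M hG hC true false t)
  rwa [sub_add_cancel] at this

lemma h3t (M : Submodule k (PAlg k Q2)) (hG : G k ⊆ M) (hC : Closed M) (t : List Bool) :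
    pvec k (pth (true :: false :: true :: t)) ∈ M := by
  have e : rmul k (pvec k (pth [false, true]) - pvec k (pth [true, false])) (pth (true :: t))
      = pvec k (pth (false :: true :: true :: t)) - pvec k (pth (true :: false :: true :: t)) := by
    rw [rmul_sub, rmul_pvec, rmul_pvec, comp_pth, comp_pth]; rfl
  have hr := (hC () () (pth (true :: t)) _ (mem_binom M hG)).2
  rw [e] at hr
  have := M.sub_mem (h2 M hG hC false true t) hr
  rwa [sub_sub_cancel] at this

lemma pow3 (M : Submodule k (PAlg k Q2)) (hG : G k ⊆ M) (hC : Closed M) (x y z : Bool)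
    (t : List Bool) : pvec k (pth (x :: y :: z :: t)) ∈ M := by
  cases x <;> cases y <;> cases z <;>
    first
      | exact h1 M hG hC _ _
      | exact h2 M hG hC _ _ _
      | exact h3f M hG hC _
      | exact h3t M hG hC _

lemma I2_le_MT : idealGen k Q2 (G k) ≤ MT k :=
  fun x hx => (mem_idealGen_iff (G k) x).mp hx (MT k) G_subset_MT MT_closed

lemma coeff_pvec_self (l : List Bool) : (pvec k (pth l)) ⟨(), (), pth l⟩ = 1 :=
  Finsupp.single_eq_same

lemma coeff_pvec_ne (l l' : List Bool) (h : l ≠ l') :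
    (pvec k (pth l)) ⟨(), (), pth l'⟩ = 0 :=
  Finsupp.single_eq_of_ne fun hc => h (pth_inj (sig_inj hc.symm))

lemma not_mem_ab : pvec k (pth [false, true]) ∉ idealGen k Q2 (G k) := by
  intro hx
  have h := (I2_le_MT hx).2
  rw [coeff_pvec_self, coeff_pvec_ne [false, true] [true, false] (by decide), add_zero] at h
  exact one_ne_zero h

lemma not_mem_ba : pvec k (pth [true, false]) ∉ idealGen k Q2 (G k) := by
  intro hx
  have h := (I2_le_MT hx).2
  rw [coeff_pvec_self, coeff_pvec_ne [true, false] [false, true] (by decide), zero_add] at h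
  exact one_ne_zero h

lemma mem_I_aa : pvec k (pth [false, false]) ∈ idealGen k Q2 (G k) :=
  (mem_idealGen_iff _ _).mpr fun M hG _ => mem_aa M hG

lemma mem_I_bb : pvec k (pth [true, true]) ∈ idealGen k Q2 (G k) :=
  (mem_idealGen_iff _ _).mpr fun M hG _ => mem_bb M hG

lemma mem_I_xx (x : Bool) : pvec k (pth [x, x]) ∈ idealGen k Q2 (G k) := by
  cases x
  · exact mem_I_aa
  · exact mem_I_bb

lemma length_arrows {u v : Q2.V} (p : Path Q2 u v) : p.length = p.arrows.length := by
  rw [← length_pth p.arrows, pth_arrows]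

/-- The admissible ideal. -/
def J2 (k : Type) [Field k] : AdmissibleIdeal k Q2 where
  I := idealGen k Q2 (G k)
  lmul_mem := fun {u v} p {x} hx => (idealGen_closed (G k) u v p x hx).1
  rmul_mem := fun {u v} p {x} hx => (idealGen_closed (G k) u v p x hx).2
  bound := 3
  two_le_bound := by norm_num
  pow_le := by
    intro u v p hp
    rw [length_arrows] at hp
    rw [← pth_arrows p]
    rcases hl : p.arrows with _ | ⟨x, _ | ⟨y, _ | ⟨z, t⟩⟩⟩ <;> rw [hl] at hp <;>
      simp only [List.length] at hp
    · omega
    · omega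
    · omega
    · exact (mem_idealGen_iff _ _).mpr fun M hG hC => pow3 M hG hC x y z t
  le_sq := fun x hx s hs => (I2_le_MT hx).1 s hs

lemma comp2_eq (a b : Bool) (h : Q2.src b = Q2.tgt a) : comp2 (Q := Q2) a b h = pth [a, b] := rfl

/-- The special biserial structure. -/
def SB2 (k : Type) [Field k] : SpecialBiserial k Q2 where
  toAdmissibleIdeal := J2 k
  src_card := fun _ => le_of_le_of_eq (Fintype.card_subtype_le _) (by simp)
  tgt_card := fun _ => le_of_le_of_eq (Fintype.card_subtype_le _) (by simp)
  unique_succ := by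
    intro a b c hb hc hab hac
    rw [comp2_eq] at hab hac
    have hb' : b ≠ a := fun h => hab (by rw [h]; exact mem_I_xx (k := k) a)
    have hc' : c ≠ a := fun h => hac (by rw [h]; exact mem_I_xx (k := k) a)
    cases a <;> cases b <;> cases c <;> simp_all
  unique_pred := by
    intro a b c hb hc hab hac
    rw [comp2_eq] at hab hac
    have hb' : b ≠ a := fun h => hab (by rw [h]; exact mem_I_xx (k := k) a)
    have hc' : c ≠ a := fun h => hac (by rw [h]; exact mem_I_xx (k := k) a)
    cases a <;> cases b <;> cases c <;> simp_all

/-- The binomial relation `ab - ba`. -/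
def r0 (k : Type) [Field k] : BinRel (J2 k) where
  s := ()
  t := ()
  u := pth [false, true]
  v := pth [true, false]
  coef := 1
  coef_ne := one_ne_zero
  u_ne_v := fun h => by have := pth_inj h; simp at this
  u_not_mem := not_mem_ab (k := k)
  v_not_mem := not_mem_ba (k := k)
  rel_mem := by
    rw [one_smul]
    exact (mem_idealGen_iff (k := k) _ _).mpr fun M hG _ => mem_binom M hG

lemma generates2 : Generates (J2 k) {r0 k} := by
  refine ⟨{⟨(), (), pth [false, false]⟩, ⟨(), (), pth [true, true]⟩}, ?_, ?_⟩
  · rintro s (rfl | rfl)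
    · exact mem_I_aa (k := k)
    · exact mem_I_bb (k := k)
  · show idealGen k Q2 (G k) = _
    congr 1
    erw [Set.image_insert_eq, Set.image_singleton, Set.image_singleton]
    show G k = _
    rw [G]
    have : pvec k ((r0 k).u) - (r0 k).coef • pvec k ((r0 k).v)
        = pvec k (pth [false, true]) - pvec k (pth [true, false]) := by
      rw [show (r0 k).coef = 1 from rfl, one_smul]; rfl
    rw [this]
    ext w
    simp only [Set.mem_insert_iff, Set.mem_union, Set.mem_singleton_iff]
    tauto

lemma numComponents2 : numComponents Q2 = 1 := by
  rw [numComponents]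
  haveI : Unique (Quot (fun u v : Q2.V => ∃ a : Q2.A, Q2.src a = u ∧ Q2.tgt a = v)) :=
    ⟨⟨Quot.mk _ ()⟩, fun a => Quot.inductionOn a fun u => rfl⟩
  exact Nat.card_unique

lemma spanning2 : IsSpanningTree Q2 (∅ : Set Q2.A) := by
  constructor
  · intro u v; rfl
  · simp

def S0 (k : Type) [Field k] : Set (FreeGroup Q2.A) :=
  (FreeGroup.of '' (∅ : Set Q2.A)) ∪
    ((fun r : BinRel (J2 k) => pathWord Q2 r.u * (pathWord Q2 r.v)⁻¹) '' {r0 k})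

abbrev N0 (k : Type) [Field k] : Subgroup (FreeGroup Bool) := Subgroup.normalClosure (S0 k)

lemma pathWord_pth (l : List Bool) : pathWord Q2 (pth l) = (l.map FreeGroup.of).prod := by
  rw [pathWord, arrows_pth]

lemma w_eq : pathWord Q2 (r0 k).u * (pathWord Q2 (r0 k).v)⁻¹ =
    FreeGroup.of false * FreeGroup.of true *
      (FreeGroup.of true * FreeGroup.of false)⁻¹ := by
  show pathWord Q2 (pth [false, true]) * (pathWord Q2 (pth [true, false]))⁻¹ = _
  rw [pathWord_pth, pathWord_pth]
  simp [List.prod_cons]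

def fL (k : Type) [Field k] : Bool → Multiplicative (ℤ × ℤ) := fun b =>
  Multiplicative.ofAdd (if b then ((0 : ℤ), (1 : ℤ)) else ((1 : ℤ), (0 : ℤ)))

def phi (k : Type) [Field k] : FreeGroup Bool →* Multiplicative (ℤ × ℤ) :=
  FreeGroup.lift (fL k)

lemma N0_le_ker : N0 k ≤ (phi k).ker := by
  apply Subgroup.normalClosure_le_normal
  rintro x (⟨y, hy, -⟩ | ⟨r, hr, rfl⟩)
  · exact absurd hy (Set.notMem_empty y)
  · rw [Set.mem_singleton_iff] at hr
    subst hr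
    rw [SetLike.mem_coe, MonoidHom.mem_ker]
    show phi k (pathWord Q2 (r0 k).u * (pathWord Q2 (r0 k).v)⁻¹) = 1
    rw [w_eq]
    simp only [map_mul, map_inv, phi, FreeGroup.lift_apply_of, fL]
    simp only [if_true, if_false, Bool.false_eq_true]
    rw [← ofAdd_add, ← ofAdd_add, mul_inv_eq_one]
    norm_num

def phibar (k : Type) [Field k] : (FreeGroup Bool ⧸ N0 k) →* Multiplicative (ℤ × ℤ) :=
  QuotientGroup.lift (N0 k) (phi k) N0_le_ker

def abar (k : Type) [Field k] : FreeGroup Bool ⧸ N0 k :=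
  QuotientGroup.mk (FreeGroup.of false)

def bbar (k : Type) [Field k] : FreeGroup Bool ⧸ N0 k :=
  QuotientGroup.mk (FreeGroup.of true)

lemma w_mem_N0 : pathWord Q2 (r0 k).u * (pathWord Q2 (r0 k).v)⁻¹ ∈ N0 k :=
  Subgroup.subset_normalClosure (Or.inr ⟨r0 k, rfl, rfl⟩)

lemma commute_ab : Commute (abar k) (bbar k) := by
  have h1 : (QuotientGroup.mk (pathWord Q2 (r0 k).u * (pathWord Q2 (r0 k).v)⁻¹) :
      FreeGroup Bool ⧸ N0 k) = 1 := (QuotientGroup.eq_one_iff _).mpr w_mem_N0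
  rw [w_eq] at h1
  have h2 : abar k * bbar k * (bbar k * abar k)⁻¹ = 1 := h1
  exact mul_inv_eq_one.mp h2

def psi (k : Type) [Field k] : Multiplicative (ℤ × ℤ) →* FreeGroup Bool ⧸ N0 k where
  toFun := fun x => abar k ^ (Multiplicative.toAdd x).1 * bbar k ^ (Multiplicative.toAdd x).2
  map_one' := by simp
  map_mul' := by
    intro x y
    show abar k ^ ((Multiplicative.toAdd x).1 + (Multiplicative.toAdd y).1) *
        bbar k ^ ((Multiplicative.toAdd x).2 + (Multiplicative.toAdd y).2) = _
    rw [zpow_add, zpow_add]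
    exact (((commute_ab (k := k)).symm.zpow_zpow _ _).mul_mul_mul_comm _ _).symm

lemma psi_comp_phibar : (psi k).comp (phibar k) = MonoidHom.id (FreeGroup Bool ⧸ N0 k) := by
  apply QuotientGroup.monoidHom_ext
  apply FreeGroup.ext_hom
  intro x
  show psi k (phibar k (QuotientGroup.mk (FreeGroup.of x))) = QuotientGroup.mk (FreeGroup.of x)
  rw [phibar, QuotientGroup.lift_mk, phi, FreeGroup.lift_apply_of]
  cases x
  · show abar k ^ (1 : ℤ) * bbar k ^ (0 : ℤ) = _
    rw [zpow_one, zpow_zero, mul_one]; rfl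
  · show abar k ^ (0 : ℤ) * bbar k ^ (1 : ℤ) = _
    rw [zpow_one, zpow_zero, one_mul]; rfl

lemma phibar_comp_psi : (phibar k).comp (psi k) = MonoidHom.id (Multiplicative (ℤ × ℤ)) := by
  refine MonoidHom.ext fun x => ?_
  show phibar k (abar k ^ (Multiplicative.toAdd x).1 * bbar k ^ (Multiplicative.toAdd x).2) = x
  rw [map_mul, map_zpow, map_zpow]
  have ha : phibar k (abar k) = Multiplicative.ofAdd ((1 : ℤ), (0 : ℤ)) := by
    rw [abar, phibar, QuotientGroup.lift_mk, phi, FreeGroup.lift_apply_of]; rfl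
  have hb : phibar k (bbar k) = Multiplicative.ofAdd ((0 : ℤ), (1 : ℤ)) := by
    rw [bbar, phibar, QuotientGroup.lift_mk, phi, FreeGroup.lift_apply_of]; rfl
  rw [ha, hb]
  apply Multiplicative.toAdd.injective
  rw [toAdd_mul, toAdd_zpow, toAdd_zpow, toAdd_ofAdd, toAdd_ofAdd]
  obtain ⟨m, n⟩ := Multiplicative.toAdd x
  simp [Prod.ext_iff]

def E0 (k : Type) [Field k] : (FreeGroup Bool ⧸ N0 k) ≃* Multiplicative (ℤ × ℤ) :=
  MonoidHom.toMulEquiv (phibar k) (psi k) psi_comp_phibar phibar_comp_psi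

lemma not_free (ι : Type) : ¬ Nonempty (Multiplicative (ℤ × ℤ) ≃* FreeGroup ι) := by
  rintro ⟨f⟩
  have hcommF : ∀ g h : FreeGroup ι, g * h = h * g := by
    intro g h
    rw [← f.apply_symm_apply g, ← f.apply_symm_apply h, ← map_mul f, ← map_mul f, mul_comm]
  have hsub : ∀ x y : ι, x = y := by
    intro x y
    by_contra hxy
    set σ : Equiv.Perm (Fin 3) := Equiv.swap 0 1 with hσ
    set τ : Equiv.Perm (Fin 3) := Equiv.swap 1 2 with hτ
    set g : FreeGroup ι →* Equiv.Perm (Fin 3) :=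
      FreeGroup.lift (fun z => if z = x then σ else if z = y then τ else 1) with hg
    have h1 := congrArg g (hcommF (FreeGroup.of x) (FreeGroup.of y))
    rw [map_mul, map_mul, hg, FreeGroup.lift_apply_of, FreeGroup.lift_apply_of, if_pos rfl,
      if_neg (Ne.symm hxy), if_pos rfl] at h1
    rw [hσ, hτ] at h1
    revert h1
    decide
  by_cases hne : Nonempty ι
  · obtain ⟨x0⟩ := hne
    have hall : ∀ g : FreeGroup ι, ∃ n : ℤ, g = (FreeGroup.of x0) ^ n := by
      intro g
      induction g using FreeGroup.induction_on with
      | C1 => exact ⟨0, (zpow_zero _).symm⟩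
      | of x => exact ⟨1, by rw [hsub x x0, zpow_one]⟩
      | inv_of x hx =>
        obtain ⟨n, hn⟩ := hx
        exact ⟨-n, by rw [hn, zpow_neg]⟩
      | mul x y hx hy =>
        obtain ⟨n, hn⟩ := hx
        obtain ⟨m, hm⟩ := hy
        exact ⟨n + m, by rw [hn, hm, zpow_add]⟩
    have key : ∀ v : ℤ × ℤ, ∃ n : ℤ,
        v = n • Multiplicative.toAdd (f.symm (FreeGroup.of x0)) := by
      intro v
      obtain ⟨n, hn⟩ := hall (f (Multiplicative.ofAdd v))
      refine ⟨n, ?_⟩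
      have h2 := congrArg f.symm hn
      rw [MulEquiv.symm_apply_apply, map_zpow] at h2
      have h3 := congrArg Multiplicative.toAdd h2
      rwa [toAdd_ofAdd, toAdd_zpow] at h3
    obtain ⟨n, hn⟩ := key (1, 0)
    obtain ⟨m, hm⟩ := key (0, 1)
    set a := Multiplicative.toAdd (f.symm (FreeGroup.of x0))
    rw [Prod.ext_iff] at hn hm
    obtain ⟨hn1, hn2⟩ := hn
    obtain ⟨hm1, hm2⟩ := hm
    simp only [Prod.smul_fst, Prod.smul_snd, smul_eq_mul] at hn1 hn2 hm1 hm2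
    rcases mul_eq_zero.mp hm1.symm with h | h
    · rw [h, zero_mul] at hm2; exact one_ne_zero hm2
    · rw [h, mul_zero] at hn1; exact one_ne_zero hn1
  · have hall : ∀ g : FreeGroup ι, g = 1 := by
      intro g
      induction g using FreeGroup.induction_on with
      | C1 => rfl
      | of x => exact absurd ⟨x⟩ hne
      | inv_of x hx => rw [hx]; exact inv_one
      | mul x y hx hy => rw [hx, hy, one_mul]
    have h1 := hall (f (Multiplicative.ofAdd ((1 : ℤ), (0 : ℤ))))
    have h2 := congrArg f.symm h1
    rw [MulEquiv.symm_apply_apply, map_one] at h2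
    have h3 := congrArg Multiplicative.toAdd h2
    rw [toAdd_ofAdd, toAdd_one, Prod.ext_iff] at h3
    exact one_ne_zero h3.1


/-- there exists a non-triangular special biserial bound quiver whose
fundamental group is isomorphic to `ℤ × ℤ`; in particular the fundamental group of a
special biserial bound quiver need not be free. -/
theorem stmt17 (k : Type) [Field k] :
    ∃ (Q : FQuiver) (SB : SpecialBiserial k Q)
      (R : Set (BinRel SB.toAdmissibleIdeal)) (T : Set Q.A),
      Generates SB.toAdmissibleIdeal R ∧
      numComponents Q = 1 ∧ IsSpanningTree Q T ∧
      (∃ (x : Q.V) (p : Path Q x x), p.length ≠ 0) ∧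
      Nonempty (pi1 SB.toAdmissibleIdeal T R ≃* Multiplicative (ℤ × ℤ)) ∧
      ∀ ι : Type, ¬ Nonempty (pi1 SB.toAdmissibleIdeal T R ≃* FreeGroup ι) := by
  refine ⟨Q2, SB2 k, {r0 k}, ∅, generates2, numComponents2, spanning2,
    ⟨(), pth [false], by rw [length_pth]; decide⟩, ⟨E0 k⟩, ?_⟩
  rintro ι ⟨e⟩
  exact not_free ι ⟨((E0 k).symm.trans e)⟩

end FQuiver
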